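/- arXiv:2605.10909 — 5 statements merged into one kernel-verified Lean document; each statement's English description precedes it below -/
import Mathlib

section
/- Let f be a differentiable, β-smooth function (with respect to a norm ‖·‖) on a compact convex set C in a finite-dimensional normed space, let Φ be a differentiable, λ-strongly convex mirror map on C with Bregman divergence D_Φ, and let x_0, x_1, …, x_T be the mirror descent iterates x_{t+1} = argmin_{x ∈ C} ⟨∇f(x_t), x⟩ + (1/η) D_Φ(x, x_t) with η = λ/β. Then for any fixed x^* ∈ C, (1/T) Σ_{t=0}^{T−1} (−⟨∇f(x_t), x^* − x_t⟩) ≤ (1/T)·(β/λ)·D_Φ(x^*, x_0) − (1/T) Σ_{t=0}^{T−1} (f(x_{t+1}) − f(x_t)). -/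
noncomputable section

/-- Bregman divergence `D_Φ(x,y) = Φ(x) − Φ(y) − ⟨∇Φ(y), x − y⟩`, where the pairing with
the gradient of the differentiable mirror map `Φ` is expressed via its Fréchet derivative. -/
def breg {E : Type*} [NormedAddCommGroup E] [NormedSpace ℝ E] (Φ : E → ℝ) (x y : E) : ℝ :=
  Φ x - Φ y - fderiv ℝ Φ y (x - y)

/-- First-order optimality: if `p` minimizes `y ↦ c y + (1/η) breg Φ y q` over convex `C`,
then the directional derivative toward any `s ∈ C` is nonnegative. -/
lemma md_foc {E : Type*} [NormedAddCommGroup E] [NormedSpace ℝ E]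
    (C : Set E) (Φ : E → ℝ) (η : ℝ) (c : E →L[ℝ] ℝ) (p q s : E)
    (hC : Convex ℝ C) (hΦ : Differentiable ℝ Φ)
    (hp : p ∈ C) (hs : s ∈ C)
    (hmin : ∀ y ∈ C, c p + (1 / η) * breg Φ p q ≤ c y + (1 / η) * breg Φ y q) :
    0 ≤ c (s - p) + (1 / η) * ((fderiv ℝ Φ p) (s - p) - (fderiv ℝ Φ q) (s - p)) := by
  set L : E →L[ℝ] ℝ := fderiv ℝ Φ q
  set g : E → ℝ := fun y => c y + (1 / η) * breg Φ y q with hg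
  have hloc : IsLocalMinOn g C p := by
    apply Filter.eventually_iff_exists_mem.2
    exact ⟨C, self_mem_nhdsWithin, fun y hy => hmin y hy⟩
  have hder : HasFDerivAt g (c + (1 / η) • (fderiv ℝ Φ p - L)) p := by
    have h1 : HasFDerivAt (fun y : E => c y) c p := c.hasFDerivAt
    have h3 : HasFDerivAt (fun y : E => L (y - q)) L p := by
      have := L.hasFDerivAt.comp p ((hasFDerivAt_id p).sub_const q)
      simpa [Function.comp_def, map_sub] using this
    have h2 : HasFDerivAt (fun y : E => Φ y - Φ q - L (y - q)) (fderiv ℝ Φ p - L) p :=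
      (((hΦ p).hasFDerivAt).sub_const (Φ q)).sub h3
    exact h1.add (h2.const_mul (1 / η))
  have hcone : s - p ∈ posTangentConeAt C p :=
    sub_mem_posTangentConeAt_of_segment_subset (hC.segment_subset hp hs)
  have := hloc.hasFDerivWithinAt_nonneg hder.hasFDerivWithinAt hcone
  simpa [L] using this

/-- **Average-iterate bound for mirror descent on smooth functions.**
Let `f` be differentiable and `β`-smooth on a compact convex set `C` in a
finite-dimensional normed space, `Φ` a differentiable `λ`-strongly convex mirror map, and
`x_0, x_1, …` the mirror descent iterates with learning rate `η = λ/β` (each `x_{t+1}`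
minimizes `y ↦ ⟨∇f(x_t), y⟩ + (1/η) D_Φ(y, x_t)` over `C`). Then for any `x^* ∈ C` and
`T ≥ 1`,
`(1/T) Σ_{t<T} (−⟨∇f(x_t), x^* − x_t⟩)
  ≤ (1/T)(β/λ) D_Φ(x^*, x_0) − (1/T) Σ_{t<T} (f(x_{t+1}) − f(x_t))`. -/
theorem mirror_descent_average_directional_bound
    {E : Type*} [NormedAddCommGroup E] [NormedSpace ℝ E] [FiniteDimensional ℝ E]
    (C : Set E) (f Φ : E → ℝ) (β lam η : ℝ) (x : ℕ → E) (xstar : E) (T : ℕ)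
    (hC : Convex ℝ C) (hCcpt : IsCompact C)
    (hf : Differentiable ℝ f)
    (hsmooth : ∀ a ∈ C, ∀ b ∈ C,
      f b ≤ f a + fderiv ℝ f a (b - a) + β / 2 * ‖b - a‖ ^ 2)
    (hΦ : Differentiable ℝ Φ)
    (hsc : ∀ a ∈ C, ∀ b ∈ C,
      Φ a + fderiv ℝ Φ a (b - a) + lam / 2 * ‖b - a‖ ^ 2 ≤ Φ b)
    (hβ : 0 < β) (hlam : 0 < lam) (hη : η = lam / β)
    (hx0 : x 0 ∈ C)
    (hstep : ∀ t : ℕ, x (t + 1) ∈ C ∧ ∀ y ∈ C,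
      fderiv ℝ f (x t) (x (t + 1)) + (1 / η) * breg Φ (x (t + 1)) (x t) ≤
        fderiv ℝ f (x t) y + (1 / η) * breg Φ y (x t))
    (hxstar : xstar ∈ C) (hT : 1 ≤ T) :
    (1 / (T : ℝ)) * ∑ t ∈ Finset.range T, -(fderiv ℝ f (x t) (xstar - x t)) ≤
      (1 / (T : ℝ)) * (β / lam) * breg Φ xstar (x 0) -
        (1 / (T : ℝ)) * ∑ t ∈ Finset.range T, (f (x (t + 1)) - f (x t)) := by
  have hηinv : 1 / η = β / lam := by
    rw [hη]; rw [one_div_div]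
  have hxC : ∀ t, x t ∈ C := by
    intro t
    induction t with
    | zero => exact hx0
    | succ n _ => exact (hstep n).1
  -- per-step inequality
  have key : ∀ t : ℕ, -(fderiv ℝ f (x t) (xstar - x t)) ≤
      (β / lam) * (breg Φ xstar (x t) - breg Φ xstar (x (t + 1))) - (f (x (t + 1)) - f (x t)) := by
    intro t
    set q := x t
    set p := x (t + 1)
    set c := fderiv ℝ f q with hc
    have hq : q ∈ C := hxC t
    have hp : p ∈ C := hxC (t + 1)
    -- first-order optimality
    have hfoc := md_foc C Φ η c p q xstar hC hΦ hp hxstar (hstep t).2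
    rw [hηinv] at hfoc
    -- three-point identity
    have h3pt : (fderiv ℝ Φ p) (xstar - p) - (fderiv ℝ Φ q) (xstar - p) =
        breg Φ xstar q - breg Φ xstar p - breg Φ p q := by
      have hq' : (fderiv ℝ Φ q) (xstar - q) - (fderiv ℝ Φ q) (p - q) =
          (fderiv ℝ Φ q) (xstar - p) := by
        rw [← map_sub]; congr 1; abel
      simp only [breg]
      linarith [hq']
    -- linearity of c
    have hlin : c (xstar - q) = c (xstar - p) + c (p - q) := by
      rw [← map_add]; congr 1; abel
    -- smoothness
    have hsm : f p ≤ f q + c (p - q) + β / 2 * ‖p - q‖ ^ 2 := hsmooth q hq p hp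
    -- strong convexity lower bound on breg Φ p q
    have hscb : lam / 2 * ‖p - q‖ ^ 2 ≤ breg Φ p q := by
      have := hsc q hq p hp
      simp only [breg]
      linarith
    -- (β/lam) * breg Φ p q ≥ β/2 * ‖p-q‖^2
    have hmul : β / 2 * ‖p - q‖ ^ 2 ≤ (β / lam) * breg Φ p q := by
      have h1 : (β / lam) * (lam / 2 * ‖p - q‖ ^ 2) ≤ (β / lam) * breg Φ p q :=
        mul_le_mul_of_nonneg_left hscb (le_of_lt (div_pos hβ hlam))
      have h2 : (β / lam) * (lam / 2 * ‖p - q‖ ^ 2) = β / 2 * ‖p - q‖ ^ 2 := by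
        field_simp
      linarith
    rw [h3pt] at hfoc
    linarith
  -- sum up
  have hsum : ∑ t ∈ Finset.range T, -(fderiv ℝ f (x t) (xstar - x t)) ≤
      (β / lam) * (breg Φ xstar (x 0) - breg Φ xstar (x T)) -
        ∑ t ∈ Finset.range T, (f (x (t + 1)) - f (x t)) := by
    have h1 : ∑ t ∈ Finset.range T, -(fderiv ℝ f (x t) (xstar - x t)) ≤
        ∑ t ∈ Finset.range T,
          ((β / lam) * (breg Φ xstar (x t) - breg Φ xstar (x (t + 1))) -
            (f (x (t + 1)) - f (x t))) :=
      Finset.sum_le_sum fun t _ => key t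
    have h2 : ∑ t ∈ Finset.range T,
          ((β / lam) * (breg Φ xstar (x t) - breg Φ xstar (x (t + 1))) -
            (f (x (t + 1)) - f (x t))) =
        (β / lam) * (breg Φ xstar (x 0) - breg Φ xstar (x T)) -
          ∑ t ∈ Finset.range T, (f (x (t + 1)) - f (x t)) := by
      rw [Finset.sum_sub_distrib, ← Finset.mul_sum,
        Finset.sum_range_sub' (fun t => breg Φ xstar (x t))]
    linarith [h1, h2.le, h2.ge]
  -- final Bregman divergence is nonnegative
  have hT0 : 0 ≤ breg Φ xstar (x T) := by
    have := hsc (x T) (hxC T) xstar hxstar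
    have hn : 0 ≤ lam / 2 * ‖xstar - x T‖ ^ 2 := by positivity
    simp only [breg]
    linarith
  have htot : ∑ t ∈ Finset.range T, -(fderiv ℝ f (x t) (xstar - x t)) ≤
      (β / lam) * breg Φ xstar (x 0) -
        ∑ t ∈ Finset.range T, (f (x (t + 1)) - f (x t)) := by
    have hbl : 0 ≤ β / lam := le_of_lt (div_pos hβ hlam)
    nlinarith [hsum, mul_nonneg hbl hT0]
  have hTpos : (0 : ℝ) ≤ 1 / (T : ℝ) := by positivity
  have := mul_le_mul_of_nonneg_left htot hTpos
  refine this.trans_eq ?_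
  ring


end
end

section
/- For any two correlated policies π̃_1, π̃_2 over Π_det and any integer k ≥ 1, J^{π̃_1,k}(μ) = J^{π̃_2,k}(μ) − (1/(1−γ^k)) · E_{s ∼ d_μ^{π̃_2,k}} [ A^{π̃_1,k}(s, π̃_2) ], where A^{π̃_1,k}(s, π̃_2) = Q^{π̃_1,k}(s, π̃_2) − J^{π̃_1,k}(s) is the k-step advantage function. (k-step Performance Difference Lemma.) -/
open Finset

noncomputable section

variable {S A D : Type*} [Fintype S] [Fintype A] [Fintype D] [DecidableEq S]

/-- Transition matrix of a deterministic policy `pol`. -/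
def detKernel (P : S → A → S → ℝ) (pol : S → A) : Matrix S S ℝ :=
  Matrix.of fun s s' => P s (pol s) s'

/-- Expected discounted cost incurred during the first `k` steps when following the
deterministic policy `pol` starting from state `s`. -/
def detCost (P : S → A → S → ℝ) (g : S → A → ℝ) (γ : ℝ) (pol : S → A) (k : ℕ) (s : S) : ℝ :=
  ∑ t ∈ Finset.range k, γ ^ t * ∑ s', (detKernel P pol ^ t) s s' * g s' (pol s')

/-- Value function `J^{π_det}(s)` of a deterministic policy. -/
def detJ (P : S → A → S → ℝ) (g : S → A → ℝ) (γ : ℝ) (pol : S → A) (s : S) : ℝ :=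
  ∑' t : ℕ, γ ^ t * ∑ s', (detKernel P pol ^ t) s s' * g s' (pol s')

/-- Value `J^{π_det}(μ)` of a deterministic policy from an initial distribution `μ`. -/
def detJInit (P : S → A → S → ℝ) (g : S → A → ℝ) (γ : ℝ) (pol : S → A) (μ : S → ℝ) : ℝ :=
  ∑ s, μ s * detJ P g γ pol s

/-- The `k`-step transition kernel of the correlated policy with weights `w`
over the family `p` of deterministic policies. -/
def corKernel (P : S → A → S → ℝ) (p : D → S → A) (w : D → ℝ) (k : ℕ) : Matrix S S ℝ :=
  ∑ d, w d • (detKernel P (p d) ^ k)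

/-- Expected discounted cost of one `k`-step block of the correlated policy from `s`. -/
def blockCost (P : S → A → S → ℝ) (g : S → A → ℝ) (γ : ℝ) (p : D → S → A) (w : D → ℝ)
    (k : ℕ) (s : S) : ℝ :=
  ∑ d, w d * detCost P g γ (p d) k s

/-- The `k`-step value function `J^{π̃,k}(s)` of the correlated policy `w`. -/
def Jk (P : S → A → S → ℝ) (g : S → A → ℝ) (γ : ℝ) (p : D → S → A) (w : D → ℝ)
    (k : ℕ) (s : S) : ℝ :=
  ∑' m : ℕ, γ ^ (m * k) * ∑ s', (corKernel P p w k ^ m) s s' * blockCost P g γ p w k s'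

/-- `J^{π̃,k}(μ)`. -/
def JkInit (P : S → A → S → ℝ) (g : S → A → ℝ) (γ : ℝ) (p : D → S → A) (w : D → ℝ)
    (k : ℕ) (μ : S → ℝ) : ℝ :=
  ∑ s, μ s * Jk P g γ p w k s

/-- The `k`-step Q-function `Q^{π̃,k}(s, π')` with deterministic second argument `pol`. -/
def Qk (P : S → A → S → ℝ) (g : S → A → ℝ) (γ : ℝ) (p : D → S → A) (w : D → ℝ)
    (k : ℕ) (s : S) (pol : S → A) : ℝ :=
  detCost P g γ pol k s + γ ^ k * ∑ s', (detKernel P pol ^ k) s s' * Jk P g γ p w k s'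

/-- The `k`-step Q-function `Q^{π̃,k}(s, π̃')` with correlated second argument `w'`. -/
def QkCor (P : S → A → S → ℝ) (g : S → A → ℝ) (γ : ℝ) (p : D → S → A) (w : D → ℝ)
    (k : ℕ) (s : S) (w' : D → ℝ) : ℝ :=
  ∑ d, w' d * Qk P g γ p w k s (p d)

/-- The `k`-step discounted state occupancy measure `d_μ^{π̃,k}(s)`. -/
def dOcc (P : S → A → S → ℝ) (γ : ℝ) (p : D → S → A) (w : D → ℝ) (k : ℕ)
    (μ : S → ℝ) (s : S) : ℝ :=
  (1 - γ ^ k) * ∑' m : ℕ, γ ^ (m * k) * ∑ s0, μ s0 * (corKernel P p w k ^ m) s0 s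



/-! ### Auxiliary lemmas -/

set_option linter.unusedSectionVars false

def IsStoch (M : Matrix S S ℝ) : Prop :=
  (∀ s s', 0 ≤ M s s') ∧ ∀ s, ∑ s', M s s' = 1

lemma isStoch_one : IsStoch (1 : Matrix S S ℝ) := by
  refine ⟨fun s s' => ?_, fun s => ?_⟩
  · by_cases h : s = s' <;> simp [Matrix.one_apply, h]
  · simp [Matrix.one_apply]

lemma IsStoch.mul {M N : Matrix S S ℝ} (hM : IsStoch M) (hN : IsStoch N) :
    IsStoch (M * N) := by
  refine ⟨fun s s' => ?_, fun s => ?_⟩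
  · rw [Matrix.mul_apply]
    exact Finset.sum_nonneg fun i _ => mul_nonneg (hM.1 _ _) (hN.1 _ _)
  · simp only [Matrix.mul_apply]
    rw [Finset.sum_comm]
    simp only [← Finset.mul_sum]
    simp [hN.2, hM.2 s]

lemma IsStoch.pow {M : Matrix S S ℝ} (hM : IsStoch M) (m : ℕ) : IsStoch (M ^ m) := by
  induction m with
  | zero => simpa using (isStoch_one : IsStoch (1 : Matrix S S ℝ))
  | succ n ih => rw [pow_succ]; exact ih.mul hM

lemma dot_bound {w c : S → ℝ} {C : ℝ} (hw0 : ∀ s, 0 ≤ w s) (hw1 : ∑ s, w s = 1)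
    (hc : ∀ s, |c s| ≤ C) : |∑ s, w s * c s| ≤ C := by
  calc |∑ s, w s * c s| ≤ ∑ s, |w s * c s| := Finset.abs_sum_le_sum_abs _ _
    _ ≤ ∑ s, w s * C := by
        refine Finset.sum_le_sum fun i _ => ?_
        rw [abs_mul, abs_of_nonneg (hw0 i)]
        exact mul_le_mul_of_nonneg_left (hc i) (hw0 i)
    _ = C := by rw [← Finset.sum_mul, hw1, one_mul]

lemma summable_geom_bound {β : ℝ} (hβ0 : 0 ≤ β) (hβ1 : β < 1) {x : ℕ → ℝ} {C : ℝ}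
    (hx : ∀ m, |x m| ≤ C) : Summable (fun m => β ^ m * x m) := by
  refine Summable.of_norm_bounded
    ((summable_geometric_of_lt_one hβ0 hβ1).mul_left C) fun m => ?_
  rw [Real.norm_eq_abs, abs_mul, abs_of_nonneg (pow_nonneg hβ0 m), mul_comm]
  exact mul_le_mul_of_nonneg_right (hx m) (pow_nonneg hβ0 m)

lemma entry_le_one {M : Matrix S S ℝ} (hM : IsStoch M) (s s' : S) : M s s' ≤ 1 := by
  have := Finset.single_le_sum (f := fun j => M s j) (fun j _ => hM.1 s j) (Finset.mem_univ s')
  rw [hM.2 s] at this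
  exact this

lemma pow_mul_vec (M : Matrix S S ℝ) (m : ℕ) (J : S → ℝ) (s0 : S) :
    ∑ s', (M ^ m) s0 s' * ∑ s'', M s' s'' * J s'' = ∑ s'', (M ^ (m+1)) s0 s'' * J s'' := by
  rw [pow_succ]
  simp only [Matrix.mul_apply, Finset.sum_mul, Finset.mul_sum, mul_assoc]
  exact Finset.sum_comm

lemma nu_pair (M : Matrix S S ℝ) (hM : IsStoch M) {β : ℝ} (hβ0 : 0 ≤ β) (hβ1 : β < 1)
    (μ : S → ℝ) (hμ0 : ∀ s, 0 ≤ μ s) (hμ1 : ∑ s, μ s = 1) (c : S → ℝ) :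
    ∑ s, (∑' m : ℕ, β ^ m * ∑ s0, μ s0 * (M ^ m) s0 s) * c s
      = ∑' m : ℕ, β ^ m * ∑ s0, μ s0 * ∑ s', (M ^ m) s0 s' * c s' := by
  have hu : ∀ (m : ℕ) (s : S), |∑ s0, μ s0 * (M ^ m) s0 s| ≤ 1 := fun m s =>
    dot_bound hμ0 hμ1 (fun s0 => by
      rw [abs_of_nonneg ((hM.pow m).1 s0 s)]
      exact entry_le_one (hM.pow m) s0 s)
  have hsum : ∀ s : S, Summable (fun m : ℕ => (β ^ m * ∑ s0, μ s0 * (M ^ m) s0 s) * c s) :=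
    fun s => (summable_geom_bound hβ0 hβ1 (fun m => hu m s)).mul_right _
  calc ∑ s, (∑' m : ℕ, β ^ m * ∑ s0, μ s0 * (M ^ m) s0 s) * c s
      = ∑ s, ∑' m : ℕ, (β ^ m * ∑ s0, μ s0 * (M ^ m) s0 s) * c s :=
        Finset.sum_congr rfl fun s _ => (tsum_mul_right).symm
    _ = ∑' m : ℕ, ∑ s, (β ^ m * ∑ s0, μ s0 * (M ^ m) s0 s) * c s :=
        (Summable.tsum_finsetSum fun s _ => hsum s).symm
    _ = ∑' m : ℕ, β ^ m * ∑ s0, μ s0 * ∑ s', (M ^ m) s0 s' * c s' := by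
        refine tsum_congr fun m => ?_
        simp only [Finset.sum_mul, Finset.mul_sum]
        rw [Finset.sum_comm]
        exact Finset.sum_congr rfl fun _ _ => Finset.sum_congr rfl fun _ _ => by ring

lemma init_swap (M : Matrix S S ℝ) (hM : IsStoch M) {β : ℝ} (hβ0 : 0 ≤ β) (hβ1 : β < 1)
    (μ : S → ℝ) (c : S → ℝ) {C : ℝ} (hc : ∀ s, |c s| ≤ C) :
    ∑ s, μ s * ∑' m : ℕ, β ^ m * ∑ s', (M ^ m) s s' * c s'
      = ∑' m : ℕ, β ^ m * ∑ s0, μ s0 * ∑ s', (M ^ m) s0 s' * c s' := by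
  have hy : ∀ (m : ℕ) (s : S), |∑ s', (M ^ m) s s' * c s'| ≤ C := fun m s =>
    dot_bound ((hM.pow m).1 s) ((hM.pow m).2 s) hc
  have hsum : ∀ s : S, Summable (fun m : ℕ => μ s * (β ^ m * ∑ s', (M ^ m) s s' * c s')) :=
    fun s => (summable_geom_bound hβ0 hβ1 (fun m => hy m s)).mul_left _
  calc ∑ s, μ s * ∑' m : ℕ, β ^ m * ∑ s', (M ^ m) s s' * c s'
      = ∑ s, ∑' m : ℕ, μ s * (β ^ m * ∑ s', (M ^ m) s s' * c s') :=
        Finset.sum_congr rfl fun s _ => (tsum_mul_left).symm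
    _ = ∑' m : ℕ, ∑ s, μ s * (β ^ m * ∑ s', (M ^ m) s s' * c s') :=
        (Summable.tsum_finsetSum fun s _ => hsum s).symm
    _ = ∑' m : ℕ, β ^ m * ∑ s0, μ s0 * ∑ s', (M ^ m) s0 s' * c s' := by
        refine tsum_congr fun m => ?_
        rw [Finset.mul_sum]
        exact Finset.sum_congr rfl fun s _ => by ring


/-- **k-step Performance Difference Lemma.**
For any two correlated policies `w₁, w₂` over the finite family `p` of deterministic
policies and any integer `k ≥ 1`,
`J^{π̃₁,k}(μ) = J^{π̃₂,k}(μ) − (1/(1−γ^k)) · E_{s ∼ d_μ^{π̃₂,k}}[A^{π̃₁,k}(s, π̃₂)]`,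
where `A^{π̃₁,k}(s, π̃₂) = Q^{π̃₁,k}(s, π̃₂) − J^{π̃₁,k}(s)`. -/
theorem kstep_performance_difference
    (P : S → A → S → ℝ) (g : S → A → ℝ) (γ gmax : ℝ) (μ : S → ℝ)
    (p : D → S → A) (w₁ w₂ : D → ℝ) (k : ℕ)
    (hP : ∀ s a, (∀ s', 0 ≤ P s a s') ∧ ∑ s', P s a s' = 1)
    (hg : ∀ s a, |g s a| ≤ gmax)
    (hγ0 : 0 < γ) (hγ1 : γ < 1)
    (hμ : μ ∈ stdSimplex ℝ S)
    (hw₁ : w₁ ∈ stdSimplex ℝ D) (hw₂ : w₂ ∈ stdSimplex ℝ D)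
    (hk : 1 ≤ k) :
    JkInit P g γ p w₁ k μ =
      JkInit P g γ p w₂ k μ -
        (1 / (1 - γ ^ k)) *
          ∑ s, dOcc P γ p w₂ k μ s *
            (QkCor P g γ p w₁ k s w₂ - Jk P g γ p w₁ k s) := by
  have hμ0 : ∀ s, 0 ≤ μ s := hμ.1
  have hμ1 : ∑ s, μ s = 1 := hμ.2
  have hw₂0 : ∀ d, 0 ≤ w₂ d := hw₂.1
  have hw₂1 : ∑ d, w₂ d = 1 := hw₂.2
  set β := γ ^ k with hβdef
  have hβ0 : 0 ≤ β := (pow_pos hγ0 k).le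
  have hβ1 : β < 1 := pow_lt_one₀ hγ0.le hγ1 (by omega)
  have hβne : 1 - β ≠ 0 := sub_ne_zero.mpr (by linarith)
  have hKd : ∀ pol : S → A, IsStoch (detKernel P pol) :=
    fun pol => ⟨fun s s' => (hP s (pol s)).1 s', fun s => (hP s (pol s)).2⟩
  have hcorApply : ∀ s s',
      corKernel P p w₂ k s s' = ∑ d, w₂ d * (detKernel P (p d) ^ k) s s' := by
    intro s s'
    simp [corKernel, Matrix.sum_apply]
  have hM : IsStoch (corKernel P p w₂ k) := by
    refine ⟨fun s s' => ?_, fun s => ?_⟩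
    · rw [hcorApply]
      exact Finset.sum_nonneg fun d _ => mul_nonneg (hw₂0 d) (((hKd (p d)).pow k).1 s s')
    · calc ∑ s', corKernel P p w₂ k s s'
          = ∑ d, w₂ d * ∑ s', (detKernel P (p d) ^ k) s s' := by
            simp only [hcorApply]
            rw [Finset.sum_comm]
            simp [Finset.mul_sum]
        _ = ∑ d, w₂ d := Finset.sum_congr rfl fun d _ => by
            rw [((hKd (p d)).pow k).2 s, mul_one]
        _ = 1 := hw₂1
  set M := corKernel P p w₂ k with hMdef
  set c := blockCost P g γ p w₂ k with hcdef
  set J := Jk P g γ p w₁ k with hJdef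
  obtain ⟨Cc, hCc⟩ := Finite.exists_le (fun s : S => |c s|)
  obtain ⟨CJ, hCJ⟩ := Finite.exists_le (fun s : S => |J s|)
  have hpow : ∀ m : ℕ, γ ^ (m * k) = β ^ m := fun m => by rw [mul_comm, pow_mul]
  have hJk2 : ∀ s, Jk P g γ p w₂ k s = ∑' m : ℕ, β ^ m * ∑ s', (M ^ m) s s' * c s' :=
    fun s => tsum_congr fun m => by rw [hpow m]
  set ν : S → ℝ := fun s => ∑' m : ℕ, β ^ m * ∑ s0, μ s0 * (M ^ m) s0 s with hνdef
  have hdOcc : ∀ s, dOcc P γ p w₂ k μ s = (1 - β) * ν s := by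
    intro s
    unfold dOcc
    congr 1
    exact tsum_congr fun m => by rw [hpow m]
  have hQ : ∀ s, QkCor P g γ p w₁ k s w₂ = c s + β * ∑ s', M s s' * J s' := by
    intro s
    unfold QkCor Qk
    simp only [mul_add]
    rw [Finset.sum_add_distrib]
    congr 1
    calc ∑ d, w₂ d * (β * ∑ s', (detKernel P (p d) ^ k) s s' * J s')
        = β * ∑ s', (∑ d, w₂ d * (detKernel P (p d) ^ k) s s') * J s' := by
          simp only [Finset.mul_sum, Finset.sum_mul]
          rw [Finset.sum_comm]
          exact Finset.sum_congr rfl fun _ _ => Finset.sum_congr rfl fun _ _ => by ring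
      _ = β * ∑ s', M s s' * J s' := by
          refine congrArg _ (Finset.sum_congr rfl fun s' _ => ?_)
          rw [← hcorApply]
  have hA : ∑ s, ν s * c s = JkInit P g γ p w₂ k μ := by
    rw [hνdef, nu_pair M hM hβ0 hβ1 μ hμ0 hμ1 c]
    unfold JkInit
    rw [show (∑ s, μ s * Jk P g γ p w₂ k s)
        = ∑ s, μ s * ∑' m : ℕ, β ^ m * ∑ s', (M ^ m) s s' * c s' from
      Finset.sum_congr rfl fun s _ => by rw [hJk2 s]]
    exact (init_swap M hM hβ0 hβ1 μ c hCc).symm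
  have hB : ∑ s, ν s * J s - β * ∑ s, ν s * (∑ s', M s s' * J s')
      = JkInit P g γ p w₁ k μ := by
    rw [hνdef, nu_pair M hM hβ0 hβ1 μ hμ0 hμ1 J,
      nu_pair M hM hβ0 hβ1 μ hμ0 hμ1 (fun s => ∑ s', M s s' * J s')]
    set b : ℕ → ℝ := fun m => β ^ m * ∑ s0, μ s0 * ∑ s', (M ^ m) s0 s' * J s' with hbdef
    have hbsum : Summable b :=
      summable_geom_bound hβ0 hβ1 (fun m => dot_bound hμ0 hμ1 fun s0 =>
        dot_bound ((hM.pow m).1 s0) ((hM.pow m).2 s0) hCJ)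
    have h2 : β * ∑' m : ℕ,
        β ^ m * ∑ s0, μ s0 * ∑ s', (M ^ m) s0 s' * (∑ s'', M s' s'' * J s'')
        = ∑' m : ℕ, b (m + 1) := by
      rw [← tsum_mul_left]
      refine tsum_congr fun m => ?_
      rw [show (∑ s0, μ s0 * ∑ s', (M ^ m) s0 s' * (∑ s'', M s' s'' * J s''))
          = ∑ s0, μ s0 * ∑ s', (M ^ (m + 1)) s0 s' * J s' from
        Finset.sum_congr rfl fun s0 _ => by rw [pow_mul_vec M m J s0]]
      rw [hbdef]
      ring
    rw [h2, Summable.tsum_eq_zero_add hbsum, add_sub_cancel_right]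
    have hb0 : b 0 = ∑ s0, μ s0 * J s0 := by
      rw [hbdef]
      simp [Matrix.one_apply]
    rw [hb0]
    rfl
  have key : ∑ s, dOcc P γ p w₂ k μ s * (QkCor P g γ p w₁ k s w₂ - J s)
      = (1 - β) * (JkInit P g γ p w₂ k μ - JkInit P g γ p w₁ k μ) := by
    calc ∑ s, dOcc P γ p w₂ k μ s * (QkCor P g γ p w₁ k s w₂ - J s)
        = ∑ s, (1 - β) * (ν s * c s + β * (ν s * ∑ s', M s s' * J s') - ν s * J s) :=
          Finset.sum_congr rfl fun s _ => by rw [hdOcc s, hQ s]; ring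
      _ = (1 - β) * (∑ s, ν s * c s + β * ∑ s, ν s * (∑ s', M s s' * J s')
            - ∑ s, ν s * J s) := by
          rw [← Finset.mul_sum]
          congr 1
          rw [Finset.sum_sub_distrib, Finset.sum_add_distrib, Finset.mul_sum]
      _ = (1 - β) * (JkInit P g γ p w₂ k μ - JkInit P g γ p w₁ k μ) := by
          rw [hA, ← hB]
          ring
  rw [key, one_div, inv_mul_cancel_left₀ hβne]
  ring


end
end

section
/- Let f be a differentiable function on a convex set C in a finite-dimensional real inner product space, let Φ be a differentiable convex mirror map on C with Bregman divergence D_Φ, let η > 0, and let x_{t+1} = argmin_{x ∈ C} ⟨∇f(x_t), x⟩ + (1/η) D_Φ(x, x_t) be one mirror descent step from x_t ∈ C (assume the argmin exists). Then for every x ∈ C, ⟨∇f(x_t), x_{t+1} − x⟩ ≤ (1/η) ( D_Φ(x, x_t) − D_Φ(x, x_{t+1}) − D_Φ(x_{t+1}, x_t) ). -/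
noncomputable section

/-- Bregman divergence `D_Φ(x,y) = Φ(x) − Φ(y) − ⟨∇Φ(y), x − y⟩` of a differentiable
mirror map `Φ` on a real inner ℝ product space. -/
def bregGrad {E : Type*} [NormedAddCommGroup E] [InnerProductSpace ℝ E] [CompleteSpace E]
    (Φ : E → ℝ) (x y : E) : ℝ :=
  Φ x - Φ y - inner ℝ (gradient Φ y) (x - y)

/-- **Three-point inequality for one mirror descent step.**
Let `f` be a differentiable function on a convex set `C` in a finite-dimensional real
inner ℝ product space, `Φ` a differentiable convex mirror map on `C`, `η > 0`, and let
`x₁` be a minimizer over `C` of `x ↦ ⟨∇f(x₀), x⟩ + (1/η) D_Φ(x, x₀)` (one mirror descent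
step from `x₀ ∈ C`). Then for every `x ∈ C`,
`⟨∇f(x₀), x₁ − x⟩ ≤ (1/η)(D_Φ(x, x₀) − D_Φ(x, x₁) − D_Φ(x₁, x₀))`. -/
theorem mirror_descent_three_point
    {E : Type*} [NormedAddCommGroup E] [InnerProductSpace ℝ E] [FiniteDimensional ℝ E]
    (C : Set E) (f Φ : E → ℝ) (η : ℝ) (x₀ x₁ : E)
    (hC : Convex ℝ C)
    (hf : Differentiable ℝ f)
    (hΦ : Differentiable ℝ Φ)
    (hΦconv : ConvexOn ℝ C Φ)
    (hη : 0 < η)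
    (hx₀ : x₀ ∈ C)
    (hx₁ : x₁ ∈ C)
    (hmin : ∀ y ∈ C,
      (inner ℝ (gradient f x₀) x₁ : ℝ) + (1 / η) * bregGrad Φ x₁ x₀ ≤
        (inner ℝ (gradient f x₀) y : ℝ) + (1 / η) * bregGrad Φ y x₀) :
    ∀ x ∈ C, (inner ℝ (gradient f x₀) (x₁ - x) : ℝ) ≤
      (1 / η) * (bregGrad Φ x x₀ - bregGrad Φ x x₁ - bregGrad Φ x₁ x₀) := by
  intro x hx
  set a : E := gradient f x₀ with ha
  set b₀ : E := gradient Φ x₀ with hb₀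
  set b₁ : E := gradient Φ x₁ with hb₁
  set v : E := x - x₁ with hv
  -- derivative of φ t = Φ (x₁ + t • v) at 0 is ⟨b₁, v⟩
  have hline : HasDerivAt (fun t : ℝ => x₁ + t • v) v 0 := by
    simpa using ((hasDerivAt_id (0:ℝ)).smul_const v).const_add x₁
  have hφ : HasDerivAt (fun t : ℝ => Φ (x₁ + t • v)) (inner ℝ b₁ v : ℝ) 0 := by
    have h1 : HasFDerivAt Φ ((InnerProductSpace.toDual ℝ E) b₁) x₁ :=
      ((hΦ x₁).hasGradientAt).hasFDerivAt
    have h2 : HasFDerivAt Φ ((InnerProductSpace.toDual ℝ E) b₁) (x₁ + (0:ℝ) • v) := by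
      simpa using h1
    have := h2.comp_hasDerivAt 0 hline
    exact (by simpa using this : HasDerivAt (Φ ∘ fun t : ℝ => x₁ + t • v) (inner ℝ b₁ v) 0)
  -- slope tendsto
  have hslope : Filter.Tendsto (fun t : ℝ => (Φ (x₁ + t • v) - Φ x₁) / t) (nhdsWithin 0 (Set.Ioi 0))
      (nhds (inner ℝ b₁ v : ℝ)) := by
    have := hφ.hasDerivWithinAt (s := Set.Ioi (0:ℝ))
    have h := (hasDerivWithinAt_iff_tendsto_slope).mp this
    have : Filter.Tendsto (slope (fun t : ℝ => Φ (x₁ + t • v)) 0) (nhdsWithin 0 (Set.Ioi 0))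
        (nhds (inner ℝ b₁ v : ℝ)) :=
      h.mono_left (nhdsWithin_mono _ (by intro t ht; exact ⟨ht, ne_of_gt ht⟩))
    refine this.congr' ?_
    filter_upwards [self_mem_nhdsWithin] with t ht
    simp [slope_def_field]
  -- eventual lower bound on slope
  have hev : ∀ᶠ t in nhdsWithin (0:ℝ) (Set.Ioi 0),
      (inner ℝ b₀ v : ℝ) - η * (inner ℝ a v : ℝ) ≤ (Φ (x₁ + t • v) - Φ x₁) / t := by
    filter_upwards [Ioc_mem_nhdsGT_of_mem (by norm_num : (0:ℝ) ∈ Set.Ico 0 1)] with t ht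
    have htpos : 0 < t := ht.1
    have hmem : x₁ + t • v ∈ C := by
      have := hC hx₁ hx (sub_nonneg.mpr ht.2) (le_of_lt htpos) (by ring)
      convert this using 1
      simp [hv, smul_sub]
      module
    have h := hmin _ hmem
    simp only [bregGrad] at h
    have hiv : (inner ℝ a (x₁ + t • v) : ℝ) = inner ℝ a x₁ + t * inner ℝ a v := by
      simp [inner_add_right, inner_smul_right]
    have hbv : (inner ℝ b₀ (x₁ + t • v - x₀) : ℝ) = inner ℝ b₀ (x₁ - x₀) + t * inner ℝ b₀ v := by
      rw [show x₁ + t • v - x₀ = (x₁ - x₀) + t • v by abel, inner_add_right, inner_smul_right]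
    rw [hiv, hbv] at h
    have h3 : (0:ℝ) ≤ t * inner ℝ a v + (1/η) * (Φ (x₁ + t • v) - Φ x₁ - t * inner ℝ b₀ v) := by
      ring_nf at h ⊢
      linarith
    rw [le_div_iff₀ htpos]
    have h4 := mul_le_mul_of_nonneg_left h3 hη.le
    have h5 : η * (t * inner ℝ a v + 1/η * (Φ (x₁ + t • v) - Φ x₁ - t * inner ℝ b₀ v))
        = η * (t * inner ℝ a v) + (Φ (x₁ + t • v) - Φ x₁ - t * inner ℝ b₀ v) := by
      field_simp
    rw [h5, mul_zero] at h4
    ring_nf at h4 ⊢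
    linarith
  have key : (inner ℝ b₀ v : ℝ) - η * (inner ℝ a v : ℝ) ≤ (inner ℝ b₁ v : ℝ) :=
    ge_of_tendsto hslope hev
  -- final algebra: expand bregGrad
  have expand : bregGrad Φ x x₀ - bregGrad Φ x x₁ - bregGrad Φ x₁ x₀
      = (inner ℝ b₁ v : ℝ) - (inner ℝ b₀ v : ℝ) := by
    simp only [bregGrad, ← hb₀, ← hb₁, hv]
    have h1 : (inner ℝ b₀ (x - x₀) : ℝ) = inner ℝ b₀ (x - x₁) + inner ℝ b₀ (x₁ - x₀) := by
      rw [← inner_add_right]; congr 1; abel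
    rw [h1]; ring
  rw [expand]
  have : (inner ℝ a (x₁ - x) : ℝ) = - inner ℝ a v := by
    rw [hv, ← inner_neg_right]; congr 1; abel
  rw [this]
  rw [div_mul_eq_mul_div, le_div_iff₀ hη]
  linarith


end
end

section
/- Let f be a differentiable, β-smooth function (with respect to a norm ‖·‖) on a convex set C in a finite-dimensional normed space, let Φ be a differentiable, λ-strongly convex mirror map on C with Bregman divergence D_Φ, and let x_{t+1} = argmin_{x ∈ C} ⟨∇f(x_t), x⟩ + (1/η) D_Φ(x, x_t) be one mirror descent step with learning rate η = λ/β (assume the argmin exists). Then f(x_{t+1}) − f(x_t) ≤ −(λ/(2η)) ‖x_{t+1} − x_t‖². (Descent lemma for mirror descent.) -/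
noncomputable section

/-- **Descent lemma for mirror descent.**
Let `f` be differentiable and `β`-smooth on a convex set `C` in a finite-dimensional
normed space, `Φ` a differentiable `λ`-strongly convex mirror map, and let `x₁` be one
mirror descent step from `x₀ ∈ C` with learning rate `η = λ/β` (i.e. `x₁` minimizes
`x ↦ ⟨∇f(x₀), x⟩ + (1/η) D_Φ(x, x₀)` over `C`). Then
`f(x₁) − f(x₀) ≤ −(λ/(2η)) ‖x₁ − x₀‖²`. -/
theorem mirror_descent_descent_lemma
    {E : Type*} [NormedAddCommGroup E] [NormedSpace ℝ E] [FiniteDimensional ℝ E]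
    (C : Set E) (f Φ : E → ℝ) (β lam η : ℝ) (x₀ x₁ : E)
    (hC : Convex ℝ C)
    (hf : Differentiable ℝ f)
    (hsmooth : ∀ a ∈ C, ∀ b ∈ C,
      f b ≤ f a + fderiv ℝ f a (b - a) + β / 2 * ‖b - a‖ ^ 2)
    (hΦ : Differentiable ℝ Φ)
    (hsc : ∀ a ∈ C, ∀ b ∈ C,
      Φ a + fderiv ℝ Φ a (b - a) + lam / 2 * ‖b - a‖ ^ 2 ≤ Φ b)
    (hβ : 0 < β) (hlam : 0 < lam) (hη : η = lam / β)
    (hx₀ : x₀ ∈ C) (hx₁ : x₁ ∈ C)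
    (hmin : ∀ y ∈ C,
      fderiv ℝ f x₀ x₁ + (1 / η) * breg Φ x₁ x₀ ≤
        fderiv ℝ f x₀ y + (1 / η) * breg Φ y x₀) :
    f x₁ - f x₀ ≤ -(lam / (2 * η)) * ‖x₁ - x₀‖ ^ 2 := by
  have hη0 : 0 < η := by rw [hη]; positivity
  have hu : (0:ℝ) < 1/η := by positivity
  set u : ℝ := 1/η with hu_def
  set K : ℝ := ‖x₁ - x₀‖ ^ 2 with hK_def
  have hK0 : 0 ≤ K := by positivity
  set c : ℝ := lam / (2 * η) with hc_def
  have hc0 : 0 < c := by rw [hc_def]; positivity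
  have hl := hlam.ne'
  have hb := hβ.ne'
  have he := hη0.ne'
  have hcu : c = u * (lam / 2) := by
    rw [hc_def, hu_def, div_mul_div_comm, one_mul, mul_comm η 2]
  have hcβ : c = β / 2 := by
    rw [hc_def, hη, div_eq_div_iff (by positivity) (by norm_num : (2:ℝ) ≠ 0)]
    field_simp
  set A : ℝ := fderiv ℝ f x₀ x₁ with hA
  set B : ℝ := fderiv ℝ f x₀ x₀ with hB
  set m : ℝ := fderiv ℝ Φ x₀ (x₁ - x₀) with hm
  set p : ℝ := Φ x₁ with hp
  set q : ℝ := Φ x₀ with hq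
  have hB₁ : breg Φ x₁ x₀ = p - q - m := rfl
  clear_value u K c A B m p q
  -- step inequality for each t ∈ (0,1)
  have allt : ∀ t : ℝ, 0 < t → t < 1 →
      A + u * breg Φ x₁ x₀ ≤ B - c * (1 - t) * K := by
    intro t ht ht1
    set z : E := x₁ + t • (x₀ - x₁) with hz_def
    have hz : z ∈ C := by
      have h := hC hx₁ hx₀ (by linarith : (0:ℝ) ≤ 1 - t) ht.le (by ring)
      convert h using 1
      rw [hz_def]; module
    have h1 := hsc z hz x₁ hx₁
    have h2 := hsc z hz x₀ hx₀
    have hn1 : ‖x₁ - z‖ ^ 2 = t ^ 2 * K := by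
      have e : x₁ - z = t • (x₁ - x₀) := by rw [hz_def]; module
      rw [e, norm_smul, Real.norm_eq_abs, abs_of_pos ht, mul_pow, hK_def]
    have hn2 : ‖x₀ - z‖ ^ 2 = (1 - t) ^ 2 * K := by
      have e : x₀ - z = (1 - t) • (x₀ - x₁) := by rw [hz_def]; module
      rw [e, norm_smul, Real.norm_eq_abs, abs_of_pos (by linarith : (0:ℝ) < 1 - t),
        norm_sub_rev, mul_pow, hK_def]
    have hL : (1 - t) * (fderiv ℝ Φ z (x₁ - z)) + t * (fderiv ℝ Φ z (x₀ - z)) = 0 := by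
      have e : (1 - t) • (x₁ - z) + t • (x₀ - z) = (0 : E) := by rw [hz_def]; module
      calc (1 - t) * (fderiv ℝ Φ z (x₁ - z)) + t * (fderiv ℝ Φ z (x₀ - z))
          = fderiv ℝ Φ z ((1 - t) • (x₁ - z) + t • (x₀ - z)) := by
            rw [map_add, map_smul, map_smul]; simp [smul_eq_mul]
        _ = 0 := by rw [e, map_zero]
    rw [hn1] at h1
    rw [hn2] at h2
    have hΦz : Φ z ≤ (1 - t) * p + t * q - lam / 2 * (t * (1 - t)) * K := by
      have h1' := mul_le_mul_of_nonneg_left h1 (by linarith : (0:ℝ) ≤ 1 - t)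
      have h2' := mul_le_mul_of_nonneg_left h2 ht.le
      nlinarith [h1', h2', hL]
    have hmin' := hmin z hz
    have hgz : fderiv ℝ f x₀ z = (1 - t) * A + t * B := by
      have e : z = (1 - t) • x₁ + t • x₀ := by rw [hz_def]; module
      rw [e, map_add, map_smul, map_smul, hA, hB]; simp [smul_eq_mul]
    have hMz : fderiv ℝ Φ x₀ (z - x₀) = (1 - t) * m := by
      have e : z - x₀ = (1 - t) • (x₁ - x₀) := by rw [hz_def]; module
      rw [e, map_smul, hm]; simp [smul_eq_mul]
    have hbz : breg Φ z x₀ = Φ z - q - (1 - t) * m := by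
      rw [breg, hMz, hq]
    rw [hgz, hbz] at hmin'
    have h3 : u * (Φ z) ≤ u * ((1 - t) * p + t * q - lam / 2 * (t * (1 - t)) * K) :=
      mul_le_mul_of_nonneg_left hΦz hu.le
    have ht' : t * (A + u * breg Φ x₁ x₀) ≤ t * B - (u * (lam / 2)) * (t * (1 - t)) * K := by
      rw [hB₁] at hmin' ⊢
      linarith [hmin', h3]
    rw [hcu]
    by_contra hcon
    push_neg at hcon
    have hcon' := mul_lt_mul_of_pos_left hcon ht
    linarith [ht', hcon']
  -- take the limit t → 0
  have key : A + u * breg Φ x₁ x₀ ≤ B - c * K := by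
    rcases eq_or_lt_of_le hK0 with hK | hK
    · have := allt (1/2) (by norm_num) (by norm_num)
      rw [← hK] at this ⊢
      linarith
    · by_contra hcon
      push_neg at hcon
      set d : ℝ := A + u * breg Φ x₁ x₀ - (B - c * K) with hd
      have hd0 : 0 < d := by rw [hd]; linarith
      clear_value d
      set t : ℝ := min (1/2) (d / (2 * c * K)) with htdef
      have h2 : t ≤ d / (2 * c * K) := min_le_right _ _
      have htle : t ≤ 1/2 := min_le_left _ _
      clear_value t
      have ht0 : 0 < t := htdef ▸ lt_min (by norm_num) (by positivity)
      have ht1 : t < 1 := lt_of_le_of_lt htle (by norm_num)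
      have h := allt t ht0 ht1
      have h3 : c * t * K ≤ d / 2 := by
        have : c * t * K ≤ c * (d / (2 * c * K)) * K := by gcongr
        calc c * t * K ≤ c * (d / (2 * c * K)) * K := this
          _ = d / 2 := by field_simp
      linarith [h, h3]
  -- strong convexity lower bound on the divergence
  have hBlow : lam / 2 * K ≤ breg Φ x₁ x₀ := by
    have := hsc x₀ hx₀ x₁ hx₁
    rw [hB₁]; rw [← hm, ← hp, ← hq, ← hK_def] at this; linarith
  have huB : u * (lam / 2 * K) ≤ u * breg Φ x₁ x₀ :=
    mul_le_mul_of_nonneg_left hBlow hu.le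
  -- smoothness
  have hsm := hsmooth x₀ hx₀ x₁ hx₁
  have hgd : fderiv ℝ f x₀ (x₁ - x₀) = A - B := by
    rw [map_sub, hA, hB]
  rw [hgd, ← hK_def] at hsm
  have : u * (lam / 2 * K) = c * K := by rw [hcu]; ring
  have h4 : β / 2 * K = c * K := by rw [hcβ]
  linarith [key, huB, hsm, this, h4]

end
end

section
/- Identify correlated policies with points of the simplex Δ(Π_det) and assume J^{π̃,k}(μ) is differentiable in π̃. For any two correlated policies π̃, π̃' ∈ Δ(Π_det), the directional derivative of J^{π̃,k}(μ) at π̃ in the direction π̃' − π̃ has the closed form ∇_{π̃'−π̃} J^{π̃,k}(μ) = (1/(1−γ^k)) · E_{s ∼ d_μ^{π̃,k}} [ Q^{π̃,k}(s, π̃') − J^{π̃,k}(s) ]. -/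
open Finset

noncomputable section

variable {S A D : Type*} [Fintype S] [Fintype A] [Fintype D] [DecidableEq S]

/-! ### Auxiliary machinery -/

section Aux

open Matrix

attribute [local instance] Matrix.linftyOpNormedRing Matrix.linftyOpNormedAlgebra

set_option linter.unusedSectionVars false

/-- entry-of-mulVec continuous linear map. -/
def mvCLM (c : S → ℝ) (s : S) : Matrix S S ℝ →L[ℝ] ℝ :=
  LinearMap.toContinuousLinearMap
  { toFun := fun X => (X *ᵥ c) s
    map_add' := by intro X Y; simp [Matrix.add_mulVec]
    map_smul' := by intro r X; simp [Matrix.smul_mulVec] }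

lemma mvCLM_apply (c : S → ℝ) (s : S) (X : Matrix S S ℝ) : mvCLM c s X = (X *ᵥ c) s := rfl

/-- entry-of-vecMul continuous linear map. -/
def vmCLM (μ : S → ℝ) (s : S) : Matrix S S ℝ →L[ℝ] ℝ :=
  LinearMap.toContinuousLinearMap
  { toFun := fun X => (μ ᵥ* X) s
    map_add' := by intro X Y; simp [Matrix.vecMul_add]
    map_smul' := by
      intro r X
      simp only [RingHom.id_apply, Matrix.vecMul, dotProduct, Matrix.smul_apply,
        smul_eq_mul, Finset.mul_sum]
      exact Finset.sum_congr rfl fun j _ => by ring }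

lemma vmCLM_apply (μ : S → ℝ) (s : S) (X : Matrix S S ℝ) : vmCLM μ s X = (μ ᵥ* X) s := rfl

lemma pow_stoch (M : Matrix S S ℝ) (h0 : ∀ s s', 0 ≤ M s s')
    (h1 : ∀ s, ∑ s', M s s' = 1) (k : ℕ) :
    (∀ s s', 0 ≤ (M ^ k) s s') ∧ (∀ s, ∑ s', (M ^ k) s s' = 1) := by
  induction k with
  | zero =>
    constructor <;> intro s
    · intro s'; simp [Matrix.one_apply]; positivity
    · simp [Matrix.one_apply]
  | succ n ih =>
    constructor
    · intro s s'
      rw [pow_succ, Matrix.mul_apply]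
      exact Finset.sum_nonneg fun j _ => mul_nonneg (ih.1 s j) (h0 j s')
    · intro s
      simp only [pow_succ, Matrix.mul_apply]
      rw [Finset.sum_comm]
      calc ∑ j, ∑ s', (M ^ n) s j * M j s' = ∑ j, (M ^ n) s j * ∑ s', M j s' := by
            simp [Finset.mul_sum]
        _ = 1 := by simp [h1, ih.2 s]

lemma stoch_norm_le_one (M : Matrix S S ℝ) (h0 : ∀ s s', 0 ≤ M s s')
    (h1 : ∀ s, ∑ s', M s s' = 1) : ‖M‖ ≤ 1 := by
  rw [Matrix.linfty_opNorm_def]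
  have : ((Finset.univ : Finset S).sup fun i => ∑ j, ‖M i j‖₊) ≤ 1 := by
    refine Finset.sup_le fun i _ => ?_
    have : ((∑ j, ‖M i j‖₊ : NNReal) : ℝ) = 1 := by
      push_cast
      simp only [coe_nnnorm, Real.norm_eq_abs]
      rw [← h1 i]
      exact Finset.sum_congr rfl fun j _ => abs_of_nonneg (h0 i j)
    exact le_of_eq (NNReal.coe_injective (by simpa using this))
  exact_mod_cast this

lemma corKernel_norm_le (P : S → A → S → ℝ) (p : D → S → A) (v : D → ℝ) (k : ℕ)
    (hP : ∀ s a, (∀ s', 0 ≤ P s a s') ∧ ∑ s', P s a s' = 1) :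
    ‖corKernel P p v k‖ ≤ ∑ d, |v d| := by
  refine (norm_sum_le _ _).trans ?_
  refine Finset.sum_le_sum fun d _ => ?_
  rw [norm_smul, Real.norm_eq_abs]
  have h := pow_stoch (detKernel P (p d)) (fun s s' => (hP s (p d s)).1 s')
    (fun s => (hP s (p d s)).2) k
  have := stoch_norm_le_one _ h.1 h.2
  nlinarith [abs_nonneg (v d), norm_nonneg (detKernel P (p d) ^ k)]

lemma JkEq (P : S → A → S → ℝ) (g : S → A → ℝ) (γ : ℝ) (p : D → S → A) (v : D → ℝ) (k : ℕ)
    (hv : ‖(γ ^ k : ℝ) • corKernel P p v k‖ < 1) (s : S) :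
    Jk P g γ p v k s =
      (Ring.inverse (1 - (γ ^ k : ℝ) • corKernel P p v k) *ᵥ
        fun s' => blockCost P g γ p v k s') s := by
  set x := (γ ^ k : ℝ) • corKernel P p v k with hxdef
  set c : S → ℝ := fun s' => blockCost P g γ p v k s' with hcdef
  have hterm : ∀ m : ℕ,
      γ ^ (m * k) * ∑ s', (corKernel P p v k ^ m) s s' * blockCost P g γ p v k s'
        = mvCLM c s (x ^ m) := by
    intro m
    rw [mvCLM_apply, hxdef, smul_pow, Matrix.smul_mulVec]
    simp only [Pi.smul_apply, smul_eq_mul, Matrix.mulVec, dotProduct]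
    rw [← pow_mul, mul_comm k m]
  have hsum : Summable fun m : ℕ => x ^ m := summable_geometric_of_norm_lt_one hv
  calc Jk P g γ p v k s = ∑' m : ℕ, mvCLM c s (x ^ m) := by
        unfold Jk; exact tsum_congr hterm
    _ = mvCLM c s (∑' m : ℕ, x ^ m) := ((mvCLM c s).map_tsum hsum).symm
    _ = _ := by rw [show ∑' m : ℕ, x ^ m = Ring.inverse (1 - x) from geom_series_eq_inverse x hv]; rfl

lemma dOccEq (P : S → A → S → ℝ) (γ : ℝ) (p : D → S → A) (w : D → ℝ) (k : ℕ) (μ : S → ℝ)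
    (hv : ‖(γ ^ k : ℝ) • corKernel P p w k‖ < 1) (s : S) :
    dOcc P γ p w k μ s =
      (1 - γ ^ k) * (μ ᵥ* Ring.inverse (1 - (γ ^ k : ℝ) • corKernel P p w k)) s := by
  set x := (γ ^ k : ℝ) • corKernel P p w k with hxdef
  have hterm : ∀ m : ℕ,
      γ ^ (m * k) * ∑ s0, μ s0 * (corKernel P p w k ^ m) s0 s = vmCLM μ s (x ^ m) := by
    intro m
    rw [vmCLM_apply, hxdef, smul_pow]
    simp only [Matrix.vecMul, dotProduct, Matrix.smul_apply, smul_eq_mul,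
      Finset.mul_sum]
    rw [← pow_mul, mul_comm k m]
    exact Finset.sum_congr rfl fun j _ => by ring
  have hsum : Summable fun m : ℕ => x ^ m := summable_geometric_of_norm_lt_one hv
  unfold dOcc
  congr 1
  calc (∑' m : ℕ, γ ^ (m * k) * ∑ s0, μ s0 * (corKernel P p w k ^ m) s0 s)
      = ∑' m : ℕ, vmCLM μ s (x ^ m) := tsum_congr hterm
    _ = vmCLM μ s (∑' m : ℕ, x ^ m) := ((vmCLM μ s).map_tsum hsum).symm
    _ = _ := by rw [show ∑' m : ℕ, x ^ m = Ring.inverse (1 - x) from geom_series_eq_inverse x hv]; rfl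

lemma corKernel_line (P : S → A → S → ℝ) (p : D → S → A) (w u : D → ℝ) (k : ℕ) (t : ℝ) :
    corKernel P p (w + t • u) k = corKernel P p w k + t • corKernel P p u k := by
  unfold corKernel
  rw [Finset.smul_sum, ← Finset.sum_add_distrib]
  refine Finset.sum_congr rfl fun d _ => ?_
  simp [add_smul, smul_smul]

lemma blockCost_line (P : S → A → S → ℝ) (g : S → A → ℝ) (γ : ℝ) (p : D → S → A)
    (w u : D → ℝ) (k : ℕ) (t : ℝ) (s : S) :
    blockCost P g γ p (w + t • u) k s = blockCost P g γ p w k s + t * blockCost P g γ p u k s := by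
  unfold blockCost
  rw [Finset.mul_sum, ← Finset.sum_add_distrib]
  refine Finset.sum_congr rfl fun d _ => ?_
  simp only [Pi.add_apply, Pi.smul_apply, smul_eq_mul]
  ring



lemma vecMul_sum_eq (μ z : S → ℝ) (B : Matrix S S ℝ) :
    ∑ s, (μ ᵥ* B) s * z s = ∑ s, μ s * (B *ᵥ z) s := by
  simp only [Matrix.vecMul, Matrix.mulVec, dotProduct, Finset.sum_mul, Finset.mul_sum]
  rw [Finset.sum_comm]
  exact Finset.sum_congr rfl fun s _ => Finset.sum_congr rfl fun s0 _ => by ring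

/-- **Closed form of the directional derivative of the k-step value.** Identifying
correlated policies with points of the simplex `Δ(Π_det)`, for any `w, w' ∈ Δ(Π_det)`,
`∇_{π̃'−π̃} J^{π̃,k}(μ) = (1/(1−γ^k)) · E_{s ∼ d_μ^{π̃,k}} [Q^{π̃,k}(s, π̃') − J^{π̃,k}(s)]`. -/
theorem directional_derivative_closed_form
    (P : S → A → S → ℝ) (g : S → A → ℝ) (γ gmax : ℝ) (μ : S → ℝ)
    (p : D → S → A) (k : ℕ) (w w' : D → ℝ)
    (hP : ∀ s a, (∀ s', 0 ≤ P s a s') ∧ ∑ s', P s a s' = 1)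
    (hg : ∀ s a, |g s a| ≤ gmax)
    (hγ0 : 0 < γ) (hγ1 : γ < 1)
    (hμ : μ ∈ stdSimplex ℝ S)
    (hk : 1 ≤ k)
    (hw : w ∈ stdSimplex ℝ D) (hw' : w' ∈ stdSimplex ℝ D)
    (hdiff : DifferentiableAt ℝ (fun v : D → ℝ => JkInit P g γ p v k μ) w) :
    fderiv ℝ (fun v : D → ℝ => JkInit P g γ p v k μ) w (w' - w) =
      (1 / (1 - γ ^ k)) *
        ∑ s, dOcc P γ p w k μ s * (QkCor P g γ p w k s w' - Jk P g γ p w k s) := by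
  classical
  set u : D → ℝ := w' - w with hu
  set Mw : Matrix S S ℝ := corKernel P p w k with hMw
  set Mu : Matrix S S ℝ := corKernel P p u k with hMu
  set x : Matrix S S ℝ := (γ ^ k : ℝ) • Mw with hxdef
  set y : Matrix S S ℝ := (γ ^ k : ℝ) • Mu with hydef
  have hγk0 : 0 < γ ^ k := pow_pos hγ0 k
  have hγk1 : γ ^ k < 1 := pow_lt_one₀ hγ0.le hγ1 (by omega)
  have hMwnorm : ‖Mw‖ ≤ 1 := by
    refine (corKernel_norm_le P p w k hP).trans ?_
    have habs : ∑ d, |w d| = 1 := by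
      rw [← hw.2]; exact Finset.sum_congr rfl fun d _ => abs_of_nonneg (hw.1 d)
    simp [habs]
  have hx : ‖x‖ < 1 := by
    rw [hxdef, norm_smul, Real.norm_eq_abs, abs_of_pos hγk0]
    nlinarith [norm_nonneg Mw]
  set B : Matrix S S ℝ := Ring.inverse (1 - x) with hBdef
  set U : (Matrix S S ℝ)ˣ := Units.oneSub x hx with hUdef
  have hUval : (U : Matrix S S ℝ) = 1 - x := rfl
  have hBU : B = (↑U⁻¹ : Matrix S S ℝ) := by rw [hBdef, ← hUval, Ring.inverse_unit]
  -- the line through w in direction u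
  set ℓ : ℝ → (D → ℝ) := fun t => w + t • u with hℓdef
  have hℓ0 : ℓ 0 = w := by simp [hℓdef]
  have hline : HasDerivAt ℓ u 0 := by
    have h1 : HasDerivAt (fun t : ℝ => t • u) ((1 : ℝ) • u) 0 := (hasDerivAt_id 0).smul_const u
    simpa [hℓdef] using h1.const_add w
  have hA : HasDerivAt (fun t => JkInit P g γ p (ℓ t) k μ)
      (fderiv ℝ (fun v : D → ℝ => JkInit P g γ p v k μ) w (w' - w)) 0 := by
    have hfd : HasFDerivAt (fun v : D → ℝ => JkInit P g γ p v k μ)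
        (fderiv ℝ (fun v : D → ℝ => JkInit P g γ p v k μ) w) (ℓ 0) := by
      rw [hℓ0]; exact hdiff.hasFDerivAt
    have h := hfd.comp_hasDerivAt 0 hline
    simp [hu, Function.comp_def] at h ⊢; exact h
  -- costs
  set cw : S → ℝ := fun s => blockCost P g γ p w k s with hcw
  set cu : S → ℝ := fun s => blockCost P g γ p u k s with hcu
  -- the matrix-valued curve and its inverse
  set N : ℝ → Matrix S S ℝ := fun t => (1 - x) - t • y with hNdef
  have hNderiv : HasDerivAt N (-y) 0 := by
    have h1 : HasDerivAt (fun t : ℝ => t • y) ((1 : ℝ) • y) 0 := (hasDerivAt_id 0).smul_const y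
    have h := (hasDerivAt_const (0 : ℝ) ((1 : Matrix S S ℝ) - x)).sub h1
    simp [hNdef, Pi.sub_def] at h ⊢; exact h
  have hN0 : N 0 = 1 - x := by simp [hNdef]
  have hGderiv : HasDerivAt (fun t => Ring.inverse (N t)) (B * y * B) 0 := by
    have hinv : HasFDerivAt Ring.inverse
        (-(ContinuousLinearMap.mulLeftRight ℝ (Matrix S S ℝ) ↑U⁻¹ ↑U⁻¹)) (N 0) := by
      rw [hN0, ← hUval]; exact hasFDerivAt_ringInverse U
    have h2 := hinv.comp_hasDerivAt 0 hNderiv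
    simp [Function.comp_def, ContinuousLinearMap.mulLeftRight_apply, hBU, mul_neg, neg_mul,
      neg_neg, mul_assoc] at h2 ⊢; exact h2
  -- the explicit local formula
  set F : ℝ → ℝ := fun t =>
    ∑ s, μ s * ((Ring.inverse (N t) *ᵥ cw) s + t * ((Ring.inverse (N t) *ᵥ cu) s)) with hFdef
  have hFderiv : HasDerivAt F (∑ s, μ s * (((B * y * B) *ᵥ cw) s + (B *ᵥ cu) s)) 0 := by
    rw [hFdef]
    refine HasDerivAt.fun_sum fun s _ => ?_
    refine HasDerivAt.const_mul (μ s) ?_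
    have h1 : HasDerivAt (fun t => (Ring.inverse (N t) *ᵥ cw) s) (((B * y * B) *ᵥ cw) s) 0 := by
      have h := (mvCLM cw s).hasFDerivAt.comp_hasDerivAt 0 hGderiv
      simp [mvCLM_apply, Function.comp_def] at h ⊢; exact h
    have h2 : HasDerivAt (fun t => (Ring.inverse (N t) *ᵥ cu) s) (((B * y * B) *ᵥ cu) s) 0 := by
      have h := (mvCLM cu s).hasFDerivAt.comp_hasDerivAt 0 hGderiv
      simp [mvCLM_apply, Function.comp_def] at h ⊢; exact h
    have h3 := (hasDerivAt_id (0 : ℝ)).mul h2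
    have h4 := h1.add h3
    have hRN0 : Ring.inverse (N 0) = B := by rw [hN0, hBdef]
    simp [hRN0, Pi.add_def, Pi.mul_def] at h4 ⊢; exact h4
  -- local equality of the two functions
  have hMu1 : (0 : ℝ) < ‖y‖ + 1 := by positivity
  set δ : ℝ := (1 - ‖x‖) / (‖y‖ + 1) with hδdef
  have hδ0 : 0 < δ := div_pos (by linarith) hMu1
  have hkey : ∀ t : ℝ, |t| < δ → ‖x + t • y‖ < 1 := by
    intro t ht
    have h0 : ‖x + t • y‖ ≤ ‖x‖ + |t| * ‖y‖ := by
      simpa [norm_smul] using norm_add_le x (t • y)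
    have h2 : |t| * ‖y‖ ≤ |t| * (‖y‖ + 1) := by nlinarith [abs_nonneg t, norm_nonneg y]
    have h3 : |t| * (‖y‖ + 1) < δ * (‖y‖ + 1) := by nlinarith
    have h4 : δ * (‖y‖ + 1) = 1 - ‖x‖ := div_mul_cancel₀ _ (ne_of_gt hMu1)
    linarith
  have hEq : ∀ t : ℝ, |t| < δ → JkInit P g γ p (ℓ t) k μ = F t := by
    intro t ht
    have hcor : corKernel P p (ℓ t) k = Mw + t • Mu := corKernel_line P p w u k t
    have hxt : (γ ^ k : ℝ) • corKernel P p (ℓ t) k = x + t • y := by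
      rw [hcor, smul_add, hxdef, hydef, smul_comm]
    have hnorm : ‖(γ ^ k : ℝ) • corKernel P p (ℓ t) k‖ < 1 := by
      rw [hxt]; exact hkey t ht
    have hblock : (fun s' => blockCost P g γ p (ℓ t) k s') = fun s' => cw s' + t * cu s' :=
      funext fun s' => blockCost_line P g γ p w u k t s'
    have hNt : (1 : Matrix S S ℝ) - (x + t • y) = N t := by
      rw [hNdef]; abel
    rw [hFdef]
    unfold JkInit
    refine Finset.sum_congr rfl fun s _ => ?_
    congr 1
    rw [JkEq P g γ p (ℓ t) k hnorm s, hxt, hblock, hNt]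
    have : (fun s' => cw s' + t * cu s') = (cw + t • cu : S → ℝ) := by
      funext s'; simp
    rw [this, Matrix.mulVec_add, Matrix.mulVec_smul]
    simp
  have hEv : (fun t => JkInit P g γ p (ℓ t) k μ) =ᶠ[nhds (0 : ℝ)] F := by
    filter_upwards [Metric.ball_mem_nhds (0 : ℝ) hδ0] with t ht
    exact hEq t (by simpa [Real.dist_eq] using ht)
  have hB' : HasDerivAt (fun t => JkInit P g γ p (ℓ t) k μ)
      (∑ s, μ s * (((B * y * B) *ᵥ cw) s + (B *ᵥ cu) s)) 0 :=
    hFderiv.congr_of_eventuallyEq hEv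
  have hmain := hA.unique hB'
  rw [hmain]
  -- now the algebraic identification
  set Jv : S → ℝ := B *ᵥ cw with hJv
  have hJk : ∀ s, Jk P g γ p w k s = Jv s := fun s => JkEq P g γ p w k hx s
  have hunit : (1 - x) * B = 1 := by rw [hBU, ← hUval]; exact U.mul_inv
  have hBell : ∀ s, Jv s = cw s + (x *ᵥ Jv) s := by
    intro s
    have h5 : (1 - x) *ᵥ Jv = cw := by
      rw [hJv, Matrix.mulVec_mulVec, hunit, Matrix.one_mulVec]
    have h6 : (1 - x) *ᵥ Jv = Jv - x *ᵥ Jv := by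
      rw [Matrix.sub_mulVec, Matrix.one_mulVec]
    have h7 := h5.symm.trans h6
    have := congrFun h7 s
    simp only [Pi.sub_apply] at this
    linarith
  have hw'line : w' = w + (1 : ℝ) • u := by simp [hu]
  have hbw' : ∀ s, blockCost P g γ p w' k s = cw s + cu s := by
    intro s
    rw [hw'line, blockCost_line]
    simp [hcw, hcu]
  have hcorw' : corKernel P p w' k = Mw + Mu := by
    rw [hw'line, corKernel_line]
    simp [hMw, hMu]
  have hQk : ∀ s, QkCor P g γ p w k s w' =
      blockCost P g γ p w' k s + (((γ ^ k : ℝ) • corKernel P p w' k) *ᵥ Jv) s := by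
    intro s
    unfold QkCor Qk blockCost corKernel
    simp only [hJk, Matrix.mulVec, dotProduct, Pi.smul_apply, Matrix.smul_apply,
      Matrix.sum_apply, smul_eq_mul, mul_add, Finset.sum_add_distrib, Finset.mul_sum,
      Finset.sum_mul]
    congr 1
    rw [Finset.sum_comm]
    exact Finset.sum_congr rfl fun d _ => Finset.sum_congr rfl fun s' _ => by ring
  have hQ : ∀ s, QkCor P g γ p w k s w' - Jk P g γ p w k s = cu s + (y *ᵥ Jv) s := by
    intro s
    rw [hQk s, hJk s, hbw' s, hcorw']
    have h8 : ((γ ^ k : ℝ) • (Mw + Mu)) = x + y := by rw [smul_add, hxdef, hydef]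
    rw [h8, Matrix.add_mulVec]
    have := hBell s
    simp only [Pi.add_apply]
    linarith
  have hne : (1 - γ ^ k : ℝ) ≠ 0 := by linarith
  have hdOcc : ∀ s, dOcc P γ p w k μ s = (1 - γ ^ k) * (μ ᵥ* B) s := fun s =>
    dOccEq P γ p w k μ hx s
  have hfinal : (1 / (1 - γ ^ k)) *
      ∑ s, dOcc P γ p w k μ s * (QkCor P g γ p w k s w' - Jk P g γ p w k s)
      = ∑ s, μ s * (((B * y * B) *ᵥ cw) s + (B *ᵥ cu) s) := by
    have hstep1 : (1 / (1 - γ ^ k)) *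
        ∑ s, dOcc P γ p w k μ s * (QkCor P g γ p w k s w' - Jk P g γ p w k s)
        = ∑ s, (μ ᵥ* B) s * ((fun s' => cu s' + (y *ᵥ Jv) s') s) := by
      rw [Finset.mul_sum]
      refine Finset.sum_congr rfl fun s _ => ?_
      rw [hdOcc s, hQ s]
      field_simp
    rw [hstep1, vecMul_sum_eq μ (fun s' => cu s' + (y *ᵥ Jv) s') B]
    refine Finset.sum_congr rfl fun s _ => ?_
    congr 1
    have h9 : (fun s' => cu s' + (y *ᵥ Jv) s') = (cu + y *ᵥ Jv : S → ℝ) := rfl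
    rw [h9, Matrix.mulVec_add, hJv, Matrix.mulVec_mulVec, Matrix.mulVec_mulVec]
    simp only [Pi.add_apply]
    ring
  exact hfinal.symm


end Aux

end
end
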